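/- Let α ∈ ℝ and let r : ℝ → ℝ be three times differentiable, set u_P(y) = r(y)·e^{iα}, and suppose u_P satisfies the modified Painlevé II equation u_P''(y) + y·u_P(y) + 2·u_P(y)·|u_P(y)|² = 0 for all y ∈ ℝ. Define u₁(y) = i·u_P(y)/(3^{1/3}·√2). Then u₁ satisfies the third-order equation u₁'''(y) + y·u₁'(y) + u₁(y) = -3^{5/3}·(3·|u₁(y)|²·u₁'(y) + u₁(y)²·conj(u₁'(y))) for all y ∈ ℝ. -/

import Mathlib

open Complex ComplexConjugate

noncomputable section

/-- The constant-phase Painlevé II profile `u_P(y) = r(y)·e^{iα}`. -/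
def uP (α : ℝ) (r : ℝ → ℝ) : ℝ → ℂ :=
  fun y => (r y : ℂ) * Complex.exp (Complex.I * (α : ℂ))

/-- The leading asymptotic coefficient `u₁(y) = i·u_P(y)/(3^{1/3}·√2)`. -/
def u₁ (α : ℝ) (r : ℝ → ℝ) : ℝ → ℂ :=
  fun y => Complex.I * uP α r y / ((((3 : ℝ) ^ ((1 : ℝ) / 3) * Real.sqrt 2 : ℝ)) : ℂ)

lemma deriv_ofReal_mul (f : ℝ → ℝ) (hf : Differentiable ℝ f) (d : ℂ) (y : ℝ) :
    deriv (fun z => (f z : ℂ) * d) y = (Complex.ofReal (deriv f y)) * d := by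
  exact (((hf y).hasDerivAt.ofReal_comp).mul_const d).deriv

/-- If `u_P = r·e^{iα}` satisfies the modified Painlevé II equation
`u_P'' + y·u_P + 2·u_P·|u_P|² = 0`, then `u₁ = i·u_P/(3^{1/3}√2)` satisfies
`u₁''' + y·u₁' + u₁ = -3^{5/3}·(3|u₁|²u₁' + u₁²·conj(u₁'))`. -/
theorem first_hierarchy_equation (α : ℝ) (r : ℝ → ℝ)
    (hr : Differentiable ℝ r) (hr' : Differentiable ℝ (deriv r))
    (hr'' : Differentiable ℝ (deriv (deriv r)))
    (hP : ∀ y : ℝ,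
      deriv (deriv (uP α r)) y + (y : ℂ) * uP α r y +
        2 * uP α r y * (Complex.normSq (uP α r y) : ℂ) = 0) :
    ∀ y : ℝ,
      deriv (deriv (deriv (u₁ α r))) y + (y : ℂ) * deriv (u₁ α r) y + u₁ α r y =
        -((((3 : ℝ) ^ ((5 : ℝ) / 3) : ℝ)) : ℂ) *
          (3 * (Complex.normSq (u₁ α r y) : ℂ) * deriv (u₁ α r) y +
            (u₁ α r y) ^ 2 * conj (deriv (u₁ α r) y)) := by
  intro y
  set c : ℂ := Complex.exp (Complex.I * (α : ℂ)) with hc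
  set k : ℂ := ((((3 : ℝ) ^ ((1 : ℝ) / 3) * Real.sqrt 2 : ℝ)) : ℂ) with hk
  have hc1 : c * conj c = 1 := by
    rw [Complex.mul_conj]
    norm_cast
    simp [hc, Complex.normSq_eq_norm_sq, Complex.norm_exp]
  -- second derivative of r from Painlevé
  have hP2 : ∀ z, deriv (deriv r) z = -(z * r z) - 2 * (r z) ^ 3 := by
    intro z
    have h := hP z
    have e1 : deriv (uP α r) = fun w => (Complex.ofReal (deriv r w)) * c :=
      funext fun w => deriv_ofReal_mul r hr c w
    have hd : deriv (deriv (uP α r)) z = (Complex.ofReal (deriv (deriv r) z)) * c := by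
      rw [show deriv (uP α r) = fun w => (Complex.ofReal (deriv r w)) * c from e1]
      exact deriv_ofReal_mul _ hr' c z
    have hns : (Complex.normSq (uP α r z) : ℂ) = (((r z) ^ 2 : ℝ) : ℂ) := by
      simp [uP, Complex.normSq_mul, Complex.normSq_eq_norm_sq, Complex.norm_exp, sq]
    have huPz : uP α r z = (r z : ℂ) * c := rfl
    rw [hd, hns, huPz] at h
    have h' : ((deriv (deriv r) z + z * r z + 2 * (r z) ^ 3 : ℝ) : ℂ) * c = 0 := by
      push_cast at h ⊢
      linear_combination h
    rcases mul_eq_zero.mp h' with h'' | h''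
    · have : deriv (deriv r) z + z * r z + 2 * (r z) ^ 3 = 0 := by exact_mod_cast h''
      linarith
    · exact absurd h'' (Complex.exp_ne_zero _)
  -- third derivative of r
  have hd3r : deriv (deriv (deriv r)) y
      = -(r y + y * deriv r y) - 6 * (r y) ^ 2 * deriv r y := by
    have e : deriv (deriv r) = fun z => -(z * r z) - 2 * (r z) ^ 3 := funext hP2
    rw [e]
    have hr1 := (hr y).hasDerivAt
    have h2 : HasDerivAt (fun z : ℝ => z * r z) (1 * r y + y * deriv r y) y :=
      (hasDerivAt_id y).mul hr1
    have h3 : HasDerivAt (fun z : ℝ => (r z) ^ 3) (3 * (r y) ^ 2 * deriv r y) y := by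
      have := hr1.pow 3; simp at this; exact this
    have h4 := (h2.neg).sub (h3.const_mul 2)
    have h5 : HasDerivAt (fun z : ℝ => -(z * r z) - 2 * (r z) ^ 3)
        (-(r y + y * deriv r y) - 6 * (r y) ^ 2 * deriv r y) y := by
      exact h4.congr_deriv (by ring)
    exact h5.deriv
  -- rewrite u₁ and its derivatives
  have hu1 : u₁ α r = fun z => (r z : ℂ) * (Complex.I * c / k) := by
    funext z; simp only [u₁, uP, hc, hk]; ring
  have hd1 : deriv (u₁ α r) = fun z => (Complex.ofReal (deriv r z)) * (Complex.I * c / k) := by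
    rw [hu1]; funext z; exact deriv_ofReal_mul r hr _ z
  have hd2 : deriv (deriv (u₁ α r))
      = fun z => (Complex.ofReal (deriv (deriv r) z)) * (Complex.I * c / k) := by
    rw [hd1]; funext z; exact deriv_ofReal_mul _ hr' _ z
  have hd3 : deriv (deriv (deriv (u₁ α r))) y
      = (Complex.ofReal (deriv (deriv (deriv r)) y)) * (Complex.I * c / k) := by
    rw [hd2]; exact deriv_ofReal_mul _ hr'' _ y
  rw [hd3, hd3r, hd1, hu1]
  rw [← Complex.mul_conj]
  -- numeric facts
  set t : ℂ := (((3 : ℝ) ^ ((1 : ℝ) / 3) : ℝ) : ℂ) with ht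
  set s : ℂ := ((Real.sqrt 2 : ℝ) : ℂ) with hs
  have hkts : k = t * s := by rw [hk, ht, hs]; push_cast; ring
  have ht3 : t ^ 3 = 3 := by
    rw [ht]; norm_cast
    rw [← Real.rpow_natCast ((3:ℝ) ^ ((1:ℝ)/3)) 3, ← Real.rpow_mul (by norm_num)]
    norm_num
  have hs2 : s ^ 2 = 2 := by
    rw [hs]; norm_cast; exact Real.sq_sqrt (by norm_num)
  have hM : ((((3 : ℝ) ^ ((5 : ℝ) / 3) : ℝ)) : ℂ) = t ^ 5 := by
    rw [ht]; norm_cast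
    rw [← Real.rpow_natCast ((3:ℝ) ^ ((1:ℝ)/3)) 5, ← Real.rpow_mul (by norm_num)]
    norm_num
  have ht0 : t ≠ 0 := by
    rw [ht]; norm_cast; positivity
  have hs0 : s ≠ 0 := by
    rw [hs]; norm_cast; exact Real.sqrt_ne_zero'.mpr (by norm_num)
  rw [hkts, hM]
  simp only [map_mul, map_div₀, Complex.conj_I, Complex.conj_ofReal]
  set d : ℂ := conj c with hdd
  have hct : (starRingEnd ℂ) t = t := by rw [ht]; exact Complex.conj_ofReal _
  have hcs : (starRingEnd ℂ) s = s := by rw [hs]; exact Complex.conj_ofReal _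
  rw [hct, hcs]
  have hI : Complex.I ^ 2 = -1 := Complex.I_sq
  have h7 : t ^ 9 * t⁻¹ ^ 6 = 3 := by
    have e : t ^ 9 * t⁻¹ ^ 6 = t ^ 3 * (t * t⁻¹) ^ 6 := by ring
    rw [e, mul_inv_cancel₀ ht0, one_pow, mul_one, ht3]
  have h8 : s ^ 4 * s⁻¹ ^ 6 = 1 / 2 := by
    have e : s ^ 4 * s⁻¹ ^ 6 = s⁻¹ ^ 2 * (s * s⁻¹) ^ 4 := by ring
    rw [e, mul_inv_cancel₀ hs0, one_pow, mul_one, ← one_div, div_pow, one_pow, hs2]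
  push_cast
  field_simp
  linear_combination (-6 * c * (Complex.ofReal (r y)) ^ 2 * (Complex.ofReal (deriv r y))) * hs2 + (-4 * (Complex.ofReal (r y)) ^ 2 * (Complex.ofReal (deriv r y)) * c ^ 2 * t ^ 3 * d) * hI
    + (4 * (Complex.ofReal (r y)) ^ 2 * (Complex.ofReal (deriv r y)) * c ^ 2 * d) * ht3 + (12 * (Complex.ofReal (r y)) ^ 2 * (Complex.ofReal (deriv r y)) * c) * hc1
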